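/- Suppose λ_i ≠ 0. Then (s,s') ∈ Z_i^λ(d,v) if and only if (s',s) ∈ Z_i^{λ'}(d,v'). In particular, if b_i(s')a_i(s') = λ'_i·Id, a_i(s')b_i(s') = a_i(s)b_i(s) − λ_i·Id_{T_i}, and the sequence 0 → V'_i →^{a_i(s')} T_i →^{b_i(s)} V_i → 0 is exact, then the sequence 0 → V_i →^{a_i(s)} T_i →^{b_i(s')} V'_i → 0 is also exact. -/

import Mathlib

open scoped BigOperators

noncomputable section

structure QuiverShape (I Hh : Type) : Type where
  src : Hh → I
  tgt : Hh → I
  noloop : ∀ h, src h ≠ tgt h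
  rev : Hh → Hh
  rev_ne : ∀ h, rev h ≠ h
  rev_rev : ∀ h, rev (rev h) = h
  src_rev : ∀ h, src (rev h) = tgt h
  tgt_rev : ∀ h, tgt (rev h) = src h
  eps : Hh → ℂ
  eps_pm : ∀ h, eps h = 1 ∨ eps h = -1
  eps_rev : ∀ h, eps (rev h) = - eps h

namespace QuiverShape

variable {I Hh : Type}

/-- The representation space `S(d,v)`: a triple `(B, γ, δ)`. -/
abbrev Rep (Q : QuiverShape I Hh) (d v : I → ℕ) : Type :=
  ((h : Hh) → Matrix (Fin (v (Q.tgt h))) (Fin (v (Q.src h))) ℂ)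
  × ((i : I) → Matrix (Fin (v i)) (Fin (d i)) ℂ)
  × ((i : I) → Matrix (Fin (d i)) (Fin (v i)) ℂ)

/-- The group `G_v = ∏ᵢ GL(Vᵢ)`. -/
abbrev GV (v : I → ℕ) : Type := (i : I) → (Matrix (Fin (v i)) (Fin (v i)) ℂ)ˣ

/-- The action of `G_v` on `S(d,v)`. -/
def act (Q : QuiverShape I Hh) {d v : I → ℕ} (g : GV v) (s : Q.Rep d v) : Q.Rep d v :=
  ⟨fun h => ((g (Q.tgt h)).val * s.1 h) * ((g (Q.src h))⁻¹ : (Matrix _ _ ℂ)ˣ).val,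
   fun i => (g i).val * s.2.1 i,
   fun i => s.2.2 i * ((g i)⁻¹ : (Matrix _ _ ℂ)ˣ).val⟩

/-- `B_{h̄}`, pulled back to a matrix `V_{h₁} → V_{h₀}` via the identities
`(h̄)₀ = h₁`, `(h̄)₁ = h₀`. -/
def Bbar (Q : QuiverShape I Hh) {d v : I → ℕ} (s : Q.Rep d v) (h : Hh) :
    Matrix (Fin (v (Q.src h))) (Fin (v (Q.tgt h))) ℂ :=
  Matrix.reindex (finCongr (congrArg v (Q.tgt_rev h))) (finCongr (congrArg v (Q.src_rev h)))
    (s.1 (Q.rev h))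

/-- The `i`-th component of the moment map:
`μᵢ(s) = ∑_{h : h₁ = i} ε(h) B_h B_{h̄} + γᵢ δᵢ`. -/
def mu (Q : QuiverShape I Hh) [Fintype Hh] [DecidableEq I] {d v : I → ℕ}
    (s : Q.Rep d v) (i : I) : Matrix (Fin (v i)) (Fin (v i)) ℂ :=
  (∑ h : {h : Hh // Q.tgt h = i},
      Q.eps h.1 • (Matrix.reindex (finCongr (congrArg v h.2)) (finCongr (congrArg v h.2))
        (s.1 h.1 * Q.Bbar s h.1)))
  + s.2.1 i * s.2.2 i

/-- `Λ_λ(d,v) = μ⁻¹(λ)`. -/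
def lamSet (Q : QuiverShape I Hh) [Fintype Hh] [DecidableEq I] (lam : I → ℂ) (d v : I → ℕ) :
    Set (Q.Rep d v) :=
  {s | ∀ i, Q.mu s i = lam i • (1 : Matrix (Fin (v i)) (Fin (v i)) ℂ)}

/-- Index type for the coordinates (matrix entries) of `S(d,v)`. -/
abbrev Coord (Q : QuiverShape I Hh) (d v : I → ℕ) : Type :=
  ((h : Hh) × (Fin (v (Q.tgt h)) × Fin (v (Q.src h))))
  ⊕ (((i : I) × (Fin (v i) × Fin (d i)))
  ⊕ ((i : I) × (Fin (d i) × Fin (v i))))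

/-- The coordinates of a point of `S(d,v)`. -/
def coords (Q : QuiverShape I Hh) {d v : I → ℕ} (s : Q.Rep d v) : Q.Coord d v → ℂ
  | Sum.inl ⟨h, rc⟩ => s.1 h rc.1 rc.2
  | Sum.inr (Sum.inl ⟨i, rc⟩) => s.2.1 i rc.1 rc.2
  | Sum.inr (Sum.inr ⟨i, rc⟩) => s.2.2 i rc.1 rc.2

/-- A function `S(d,v) → ℂ` is polynomial if it is given by a polynomial in the
matrix entries. -/
def IsPolyFun (Q : QuiverShape I Hh) {d v : I → ℕ} (f : Q.Rep d v → ℂ) : Prop :=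
  ∃ P : MvPolynomial (Q.Coord d v) ℂ, ∀ s, f s = MvPolynomial.eval (Q.coords s) P

/-- The character `χ_m(g) = ∏ᵢ det(gᵢ)^{mᵢ}`. -/
def chi [Fintype I] {v : I → ℕ} (m : I → ℤ) (g : GV v) : ℂ :=
  ∏ i, ((g i : Matrix (Fin (v i)) (Fin (v i)) ℂ).det) ^ (m i)

/-- `χ_m`-semistability. -/
def Semistable (Q : QuiverShape I Hh) [Fintype I] {d v : I → ℕ} (m : I → ℤ)
    (s : Q.Rep d v) : Prop :=
  ∃ n : ℕ, 0 < n ∧ ∃ f : Q.Rep d v → ℂ, Q.IsPolyFun f ∧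
      (∀ (g : GV v) (t : Q.Rep d v), f (Q.act g t) = (chi m g) ^ n * f t) ∧ f s ≠ 0

/-- `a_{ij}` = number of arrows from `i` to `j`. -/
def aCount (Q : QuiverShape I Hh) (i j : I) : ℕ :=
  Nat.card {h : Hh // Q.src h = i ∧ Q.tgt h = j}

/-- The generalized Cartan matrix `c_{ij} = 2δ_{ij} - a_{ij}`. -/
def cartan (Q : QuiverShape I Hh) [DecidableEq I] (i j : I) : ℤ :=
  2 * (if i = j then 1 else 0) - (Q.aCount i j : ℤ)

/-- `T_i = D_i ⊕ ⊕_{h : h₁ = i} V_{h₀}`. -/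
abbrev TSpace (Q : QuiverShape I Hh) (d v : I → ℕ) (i : I) : Type :=
  (Fin (d i) → ℂ) × ((h : {h : Hh // Q.tgt h = i}) → (Fin (v (Q.src h.1)) → ℂ))

/-- Transport between coordinate spaces of equal dimensions. -/
def vcast {m n : ℕ} (hmn : m = n) : (Fin m → ℂ) ≃ₗ[ℂ] (Fin n → ℂ) :=
  LinearEquiv.funCongrLeft ℂ ℂ (finCongr hmn.symm)

/-- `a_i(s) = (δ_i, (B_{h̄})_{h : h₁ = i}) : V_i → T_i`. -/
def aMap (Q : QuiverShape I Hh) [DecidableEq I] {d v : I → ℕ}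
    (s : Q.Rep d v) (i : I) : (Fin (v i) → ℂ) →ₗ[ℂ] Q.TSpace d v i :=
  LinearMap.prod (Matrix.mulVecLin (s.2.2 i))
    (LinearMap.pi fun h =>
      Matrix.mulVecLin (Q.Bbar s h.1) ∘ₗ (vcast (congrArg v h.2)).symm.toLinearMap)

/-- `b_i(s) = (γ_i, (ε(h) B_h)_{h : h₁ = i}) : T_i → V_i`. -/
def bMap (Q : QuiverShape I Hh) [Fintype Hh] [DecidableEq I] {d v : I → ℕ}
    (s : Q.Rep d v) (i : I) : Q.TSpace d v i →ₗ[ℂ] (Fin (v i) → ℂ) :=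
  (Matrix.mulVecLin (s.2.1 i)).comp (LinearMap.fst ℂ _ _) +
    ∑ h : {h : Hh // Q.tgt h = i},
      Q.eps h.1 •
        ((vcast (congrArg v h.2)).toLinearMap ∘ₗ Matrix.mulVecLin (s.1 h.1) ∘ₗ
          (LinearMap.proj h) ∘ₗ (LinearMap.snd ℂ _ _))

/-- The canonical identification `T_i(d,v') = T_i(d,v)` when `v'` agrees with `v`
away from `i` (and the graph has no loops). -/
def Tcast (Q : QuiverShape I Hh) {d v v' : I → ℕ} (i : I)
    (hv' : ∀ j, j ≠ i → v' j = v j) : Q.TSpace d v' i ≃ₗ[ℂ] Q.TSpace d v i :=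
  (LinearEquiv.refl ℂ (Fin (d i) → ℂ)).prodCongr
    (LinearEquiv.piCongrRight fun h =>
      vcast (hv' (Q.src h.1) (fun he => Q.noloop h.1 (he.trans h.2.symm))))

/-- Exactness of `0 → M₁ → M₂ → M₃ → 0`. -/
def ShortExact {M₁ M₂ M₃ : Type} [AddCommGroup M₁] [Module ℂ M₁] [AddCommGroup M₂]
    [Module ℂ M₂] [AddCommGroup M₃] [Module ℂ M₃]
    (f : M₁ →ₗ[ℂ] M₂) (g : M₂ →ₗ[ℂ] M₃) : Prop :=
  Function.Injective f ∧ Function.Surjective g ∧ LinearMap.range f = LinearMap.ker g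

/-- Conditions (1)–(5) defining `Z_i^λ(d,v)`. -/
def ZConds (Q : QuiverShape I Hh) [Fintype Hh] [DecidableEq I] {d v v' : I → ℕ} (i : I)
    (hv' : ∀ j, j ≠ i → v' j = v j) (lam : I → ℂ)
    (s : Q.Rep d v) (s' : Q.Rep d v') : Prop :=
  (∀ h (hs : Q.src h ≠ i) (ht : Q.tgt h ≠ i),
      s.1 h = Matrix.reindex (finCongr (hv' _ ht)) (finCongr (hv' _ hs)) (s'.1 h)) ∧
  (∀ j (hj : j ≠ i),
      s.2.1 j = Matrix.reindex (finCongr (hv' j hj)) (Equiv.refl _) (s'.2.1 j)) ∧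
  (∀ j (hj : j ≠ i),
      s.2.2 j = Matrix.reindex (Equiv.refl _) (finCongr (hv' j hj)) (s'.2.2 j)) ∧
  ShortExact ((Q.Tcast i hv').toLinearMap ∘ₗ Q.aMap s' i) (Q.bMap s i) ∧
  ((Q.Tcast i hv').toLinearMap ∘ₗ (Q.aMap s' i ∘ₗ Q.bMap s' i) ∘ₗ (Q.Tcast i hv').symm.toLinearMap
      = Q.aMap s i ∘ₗ Q.bMap s i - lam i • LinearMap.id)

/-- The variety `Z_i^λ(d,v)`: conditions (1)–(5) together with condition (6). -/
def ZRel (Q : QuiverShape I Hh) [Fintype Hh] [DecidableEq I] {d v v' : I → ℕ} (i : I)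
    (hv' : ∀ j, j ≠ i → v' j = v j) (lam lam' : I → ℂ)
    (s : Q.Rep d v) (s' : Q.Rep d v') : Prop :=
  Q.ZConds i hv' lam s s' ∧ s ∈ Q.lamSet lam d v ∧ s' ∈ Q.lamSet lam' d v'

end QuiverShape

end


open scoped BigOperators

noncomputable section AuxLemmas

namespace QuiverShape

variable {I Hh : Type}

private lemma vcast_symm {m n : ℕ} (h : m = n) : (vcast h).symm = vcast h.symm := by
  rw [vcast, vcast, LinearEquiv.funCongrLeft_symm, finCongr_symm]

private lemma sum_comp' {M N P : Type} [AddCommGroup M] [Module ℂ M] [AddCommGroup N]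
    [Module ℂ N] [AddCommGroup P] [Module ℂ P] {α : Type} [Fintype α]
    (f : α → (N →ₗ[ℂ] P)) (g : M →ₗ[ℂ] N) :
    (∑ x, f x) ∘ₗ g = ∑ x, (f x) ∘ₗ g := by
  ext y
  simp [LinearMap.sum_apply]

private lemma mulVecLin_sum {α : Type} [Fintype α] {m n : ℕ}
    (f : α → Matrix (Fin m) (Fin n) ℂ) :
    (∑ x, f x).mulVecLin = ∑ x, (f x).mulVecLin := by
  classical
  induction (Finset.univ : Finset α) using Finset.cons_induction with
  | empty => simp
  | cons a t ha ih => rw [Finset.sum_cons, Finset.sum_cons, Matrix.mulVecLin_add, ih]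

private lemma mulVecLin_smul {m n : ℕ} (c : ℂ) (M : Matrix (Fin m) (Fin n) ℂ) :
    (c • M).mulVecLin = c • M.mulVecLin := by
  ext x
  simp [Matrix.smul_mulVec]

private lemma mulVecLin_reindex' {m n m' n' : ℕ} (p : m = m') (q : n = n')
    (M : Matrix (Fin m) (Fin n) ℂ) :
    (Matrix.reindex (finCongr p) (finCongr q) M).mulVecLin
      = (vcast p).toLinearMap ∘ₗ M.mulVecLin ∘ₗ (vcast q).symm.toLinearMap := by
  rw [Matrix.mulVecLin_reindex, vcast_symm, vcast, vcast, finCongr_symm]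

private lemma Tcast_symm (Q : QuiverShape I Hh) (d : I → ℕ) {v v' : I → ℕ} (i : I)
    (hv' : ∀ j, j ≠ i → v' j = v j) :
    (Q.Tcast (d := d) i hv').symm = Q.Tcast (d := d) i (fun j hj => (hv' j hj).symm) := by
  rw [Tcast, Tcast, LinearEquiv.prodCongr_symm, LinearEquiv.refl_symm]
  congr 1

/-- `b_i(s) ∘ a_i(s)` is multiplication by `μ_i(s)`. -/
private lemma bMap_comp_aMap (Q : QuiverShape I Hh) [Fintype Hh] [DecidableEq I]
    {d v : I → ℕ} (s : Q.Rep d v) (i : I) :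
    Q.bMap s i ∘ₗ Q.aMap s i = (Q.mu s i).mulVecLin := by
  rw [mu, Matrix.mulVecLin_add, mulVecLin_sum, bMap, LinearMap.add_comp, sum_comp', add_comm]
  congr 1
  · refine Finset.sum_congr rfl fun h _ => ?_
    rw [LinearMap.smul_comp, mulVecLin_smul, mulVecLin_reindex', Matrix.mulVecLin_mul]
    congr 1
  · rw [Matrix.mulVecLin_mul]
    ext x
    rfl

private lemma lamSet_comp (Q : QuiverShape I Hh) [Fintype Hh] [DecidableEq I]
    {d v : I → ℕ} {lam : I → ℂ} {s : Q.Rep d v} (hs : s ∈ Q.lamSet lam d v) (i : I) :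
    Q.bMap s i ∘ₗ Q.aMap s i = lam i • LinearMap.id := by
  rw [Q.bMap_comp_aMap, hs i, mulVecLin_smul, Matrix.mulVecLin_one]

/-- The key linear-algebra lemma. -/
private lemma exact_swap {V T V' : Type} [AddCommGroup V] [Module ℂ V] [AddCommGroup T]
    [Module ℂ T] [AddCommGroup V'] [Module ℂ V']
    (a : V →ₗ[ℂ] T) (b : T →ₗ[ℂ] V) (A : V' →ₗ[ℂ] T) (β : T →ₗ[ℂ] V')
    (lam : ℂ) (hlam : lam ≠ 0)
    (h1 : β ∘ₗ A = (-lam) • LinearMap.id)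
    (h2 : A ∘ₗ β = a ∘ₗ b - lam • LinearMap.id)
    (h3 : ShortExact A b) :
    ShortExact a β := by
  obtain ⟨hAinj, hbsurj, hrange⟩ := h3
  have h1' : ∀ y, β (A y) = -lam • y := fun y => by
    have := LinearMap.ext_iff.mp h1 y; simpa using this
  have h2' : ∀ x, A (β x) = a (b x) - lam • x := fun x => by
    have := LinearMap.ext_iff.mp h2 x; simpa using this
  have hbA : ∀ y, b (A y) = 0 := fun y => by
    have : A y ∈ LinearMap.ker b := hrange ▸ LinearMap.mem_range_self A y
    exact this
  have hba : ∀ y, b (a y) = lam • y := by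
    intro y
    obtain ⟨x, rfl⟩ := hbsurj y
    have e0 : b (A (β x)) = 0 := hbA (β x)
    rw [h2' x, map_sub, map_smul, sub_eq_zero] at e0
    exact e0
  have hβa : ∀ y, β (a y) = 0 := by
    intro y
    obtain ⟨x, rfl⟩ := hbsurj y
    have e1 : β (A (β x)) = -lam • β x := h1' (β x)
    rw [h2' x, map_sub, map_smul] at e1
    have e2 := sub_eq_iff_eq_add.mp e1
    rw [e2]
    simp [← add_smul]
  refine ⟨?_, ?_, ?_⟩
  · intro y z hyz
    have : lam • y = lam • z := by rw [← hba y, ← hba z, hyz]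
    exact smul_right_injective V hlam this
  · intro y
    refine ⟨A ((-lam)⁻¹ • y), ?_⟩
    rw [h1' _, smul_smul, mul_inv_cancel₀ (neg_ne_zero.mpr hlam), one_smul]
  · ext x
    simp only [LinearMap.mem_range, LinearMap.mem_ker]
    constructor
    · rintro ⟨y, rfl⟩
      exact hβa y
    · intro hx
      refine ⟨lam⁻¹ • b x, ?_⟩
      have e3 := h2' x
      rw [hx, map_zero] at e3
      have hax : a (b x) = lam • x := sub_eq_zero.mp e3.symm
      rw [map_smul, hax, smul_smul, inv_mul_cancel₀ hlam, one_smul]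

private lemma shortExact_equiv {M₁ M₂ M₂' M₃ : Type} [AddCommGroup M₁] [Module ℂ M₁]
    [AddCommGroup M₂] [Module ℂ M₂] [AddCommGroup M₂'] [Module ℂ M₂']
    [AddCommGroup M₃] [Module ℂ M₃]
    (f : M₁ →ₗ[ℂ] M₂) (g : M₂' →ₗ[ℂ] M₃) (e : M₂ ≃ₗ[ℂ] M₂') :
    ShortExact f (g ∘ₗ e.toLinearMap) → ShortExact (e.toLinearMap ∘ₗ f) g := by
  rintro ⟨h1, h2, h3⟩
  refine ⟨?_, ?_, ?_⟩
  · intro x y hxy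
    exact h1 (e.injective hxy)
  · intro y
    obtain ⟨x, hx⟩ := h2 y
    exact ⟨e x, hx⟩
  · ext x
    simp only [LinearMap.mem_range, LinearMap.mem_ker, LinearMap.coe_comp, Function.comp_apply,
      LinearEquiv.coe_coe]
    constructor
    · rintro ⟨y, rfl⟩
      have : f y ∈ LinearMap.ker (g ∘ₗ e.toLinearMap) := h3 ▸ LinearMap.mem_range_self f y
      simpa using this
    · intro hx
      have hmem : e.symm x ∈ LinearMap.range f := by
        rw [h3]
        simpa using hx
      obtain ⟨y, hy⟩ := hmem
      exact ⟨y, by rw [hy]; simp⟩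

/-- One direction of the symmetry. -/
private lemma ZRel_swap (Q : QuiverShape I Hh) [Fintype Hh] [DecidableEq I]
    {d v v' : I → ℕ} {lam lam' : I → ℂ} (i : I)
    (hv' : ∀ j, j ≠ i → v' j = v j)
    (hli : lam' i = - lam i) (hlami : lam i ≠ 0)
    {s : Q.Rep d v} {s' : Q.Rep d v'} :
    Q.ZRel i hv' lam lam' s s' → Q.ZRel i (fun j hj => (hv' j hj).symm) lam' lam s' s := by
  rintro ⟨⟨c1, c2, c3, c4, c5⟩, h6, h6'⟩
  set e := Q.Tcast (d := d) i hv' with he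
  have hT : (Q.Tcast i (fun j hj => (hv' j hj).symm)) = e.symm := (Q.Tcast_symm d i hv').symm
  have hT2 : (Q.Tcast i (fun j hj => (hv' j hj).symm)).symm = e := by
    rw [hT, LinearEquiv.symm_symm]
  have hcancel : e.symm.toLinearMap ∘ₗ e.toLinearMap = LinearMap.id :=
    LinearMap.ext fun x => by simp
  refine ⟨⟨?_, ?_, ?_, ?_, ?_⟩, h6', h6⟩
  · intro h hs ht
    rw [c1 h hs ht]
    ext a b
    simp [Matrix.reindex_apply, Matrix.submatrix_apply]
  · intro j hj
    rw [c2 j hj]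
    ext a b
    simp [Matrix.reindex_apply, Matrix.submatrix_apply]
  · intro j hj
    rw [c3 j hj]
    ext a b
    simp [Matrix.reindex_apply, Matrix.submatrix_apply]
  · -- swapped exactness
    rw [hT]
    refine shortExact_equiv (Q.aMap s i) (Q.bMap s' i) e.symm ?_
    have h1 : (Q.bMap s' i ∘ₗ e.symm.toLinearMap) ∘ₗ (e.toLinearMap ∘ₗ Q.aMap s' i)
        = (- lam i) • LinearMap.id := by
      have : (Q.bMap s' i ∘ₗ e.symm.toLinearMap) ∘ₗ (e.toLinearMap ∘ₗ Q.aMap s' i)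
          = Q.bMap s' i ∘ₗ ((e.symm.toLinearMap ∘ₗ e.toLinearMap) ∘ₗ Q.aMap s' i) := rfl
      rw [this, hcancel, LinearMap.id_comp, Q.lamSet_comp h6' i, hli]
    have h2 : (e.toLinearMap ∘ₗ Q.aMap s' i) ∘ₗ (Q.bMap s' i ∘ₗ e.symm.toLinearMap)
        = Q.aMap s i ∘ₗ Q.bMap s i - lam i • LinearMap.id := by
      rw [← c5]
      rfl
    exact exact_swap (Q.aMap s i) (Q.bMap s i) _ _ (lam i) hlami h1 h2 c4
  · -- swapped moment condition
    rw [hT, LinearEquiv.symm_symm]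
    refine LinearMap.ext fun x => ?_
    have hx := LinearMap.ext_iff.mp c5 (e x)
    simp only [LinearMap.comp_apply, LinearMap.sub_apply, LinearMap.smul_apply,
      LinearMap.id_apply, LinearEquiv.coe_coe, LinearEquiv.symm_apply_apply] at hx ⊢
    have hx' : Q.aMap s i (Q.bMap s i (e x))
        = e (Q.aMap s' i (Q.bMap s' i x)) + lam i • e x := by
      rw [hx]
      abel
    rw [hx', map_add, map_smul, e.symm_apply_apply, e.symm_apply_apply, hli]
    module

end QuiverShape

end AuxLemmas


theorem ZRel_symm_iff
    {I Hh : Type} [Fintype I] [DecidableEq I] [Fintype Hh] [DecidableEq Hh]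
    (Q : QuiverShape I Hh) (d v v' : I → ℕ) (lam lam' : I → ℂ) (i : I)
    (hv' : ∀ j, j ≠ i → v' j = v j)
    (hvi : (v' i : ℤ) = (d i : ℤ) - (v i : ℤ) +
      ∑ j ∈ Finset.univ.filter (fun j => j ≠ i), (Q.aCount i j : ℤ) * (v j : ℤ))
    (hlam' : ∀ j, lam' j = lam j - (Q.cartan i j : ℂ) * lam i)
    (hlami : lam i ≠ 0) :
    (∀ (s : Q.Rep d v) (s' : Q.Rep d v'),
      Q.ZRel i hv' lam lam' s s' ↔
        Q.ZRel i (fun j hj => (hv' j hj).symm) lam' lam s' s) ∧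
    (∀ (t : Q.Rep d v) (t' : Q.Rep d v'),
      Q.bMap t' i ∘ₗ Q.aMap t' i = lam' i • LinearMap.id →
      ((Q.Tcast i hv').toLinearMap ∘ₗ (Q.aMap t' i ∘ₗ Q.bMap t' i) ∘ₗ
          (Q.Tcast i hv').symm.toLinearMap
        = Q.aMap t i ∘ₗ Q.bMap t i - lam i • LinearMap.id) →
      QuiverShape.ShortExact ((Q.Tcast i hv').toLinearMap ∘ₗ Q.aMap t' i) (Q.bMap t i) →
      QuiverShape.ShortExact (Q.aMap t i)
        (Q.bMap t' i ∘ₗ (Q.Tcast i hv').symm.toLinearMap)) := by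
  have hempty : IsEmpty {h : Hh // Q.src h = i ∧ Q.tgt h = i} :=
    ⟨fun ⟨h, h1, h2⟩ => Q.noloop h (h1.trans h2.symm)⟩
  have hcc : Q.cartan i i = 2 := by
    rw [QuiverShape.cartan, QuiverShape.aCount, Nat.card_of_isEmpty]
    simp
  have hli : lam' i = - lam i := by
    rw [hlam' i, hcc]
    push_cast
    ring
  have hli2 : lam i = - lam' i := by rw [hli]; ring
  have hlami' : lam' i ≠ 0 := by rw [hli]; simpa using hlami
  constructor
  · intro s s'
    constructor
    · exact Q.ZRel_swap i hv' hli hlami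
    · intro hz
      exact Q.ZRel_swap i (fun j hj => (hv' j hj).symm) hli2 hlami' hz
  · intro t t' h1 h2 h3
    have hcancel : (Q.Tcast (d := d) i hv').symm.toLinearMap ∘ₗ (Q.Tcast (d := d) i hv').toLinearMap
        = LinearMap.id := LinearMap.ext fun x => by simp
    refine QuiverShape.exact_swap (Q.aMap t i) (Q.bMap t i)
      ((Q.Tcast i hv').toLinearMap ∘ₗ Q.aMap t' i)
      (Q.bMap t' i ∘ₗ (Q.Tcast i hv').symm.toLinearMap) (lam i) hlami ?_ ?_ h3
    · have hassoc : (Q.bMap t' i ∘ₗ (Q.Tcast i hv').symm.toLinearMap) ∘ₗ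
          ((Q.Tcast i hv').toLinearMap ∘ₗ Q.aMap t' i)
          = Q.bMap t' i ∘ₗ (((Q.Tcast i hv').symm.toLinearMap ∘ₗ
              (Q.Tcast i hv').toLinearMap) ∘ₗ Q.aMap t' i) := rfl
      rw [hassoc, hcancel, LinearMap.id_comp, h1, hli]
    · rw [← h2]
      rfl
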